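/- Let T be a {0,1}-valued random variable, Y(1) integrable, d measurable, and e_d(X) := E[T | d(X)] with 0 < e_d(X) < 1 almost surely. Then E[T·Y(1)/e_d(X)] = E[Y(1)] + E[Cov(T, Y(1) | d(X)) / e_d(X)]. -/

import Mathlib

open MeasureTheory ProbabilityTheory

/-- Conditional covariance given a sub-σ-algebra `m`:
`Cov(A, B | m) = E[A·B | m] - E[A | m] · E[B | m]`. -/
noncomputable def condCov {Ω : Type*} [mΩ : MeasurableSpace Ω] (μ : Measure Ω)
    (m : MeasurableSpace Ω) (A B : Ω → ℝ) : Ω → ℝ :=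
  fun ω => condExp m μ (fun ω' => A ω' * B ω') ω - condExp m μ A ω * condExp m μ B ω

/-- For a {0,1}-valued treatment `T`, square-integrable outcome `Y(1)`, measurable reduction
`d` and reduced propensity `e_d(X) = E[T | d(X)]` with `0 < e_d(X) < 1` a.s.:
`E[T·Y(1)/e_d(X)] = E[Y(1)] + E[Cov(T, Y(1) | d(X)) / e_d(X)]`. -/

private theorem ipw_aux {Ω : Type*} {m : MeasurableSpace Ω} [mΩ : MeasurableSpace Ω]
    (hm : m ≤ mΩ) (μ : Measure Ω) [IsProbabilityMeasure μ] (T Y1 : Ω → ℝ)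
    (hTY : Integrable (fun ω => T ω * Y1 ω) μ)
    (hYint : Integrable Y1 μ)
    (hne : ∀ᵐ ω ∂μ, condExp m μ T ω ≠ 0)
    (hInt1 : Integrable (fun ω => T ω * Y1 ω / condExp m μ T ω) μ)
    (hInt2 : Integrable (fun ω => condCov μ m T Y1 ω / condExp m μ T ω) μ) :
    ∫ ω, T ω * Y1 ω / condExp m μ T ω ∂μ
      = ∫ ω, Y1 ω ∂μ + ∫ ω, condCov μ m T Y1 ω / condExp m μ T ω ∂μ := by
  set e := condExp m μ T with he
  have he_sm : StronglyMeasurable[m] e := stronglyMeasurable_condExp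
  have hinv_sm : StronglyMeasurable[m] (fun ω => (e ω)⁻¹) :=
    (he_sm.measurable.inv).stronglyMeasurable
  have h1 : (fun ω => T ω * Y1 ω / e ω) = fun ω => (e ω)⁻¹ * (T ω * Y1 ω) := by
    funext ω; rw [div_eq_mul_inv, mul_comm]
  have hInt1' : Integrable (fun ω => (e ω)⁻¹ * (T ω * Y1 ω)) μ := h1 ▸ hInt1
  set g := condExp m μ (fun ω' => T ω' * Y1 ω') with hg
  set c := condExp m μ Y1 with hc
  have hce : condExp m μ (fun ω => (e ω)⁻¹ * (T ω * Y1 ω)) =ᵐ[μ]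
      fun ω => (e ω)⁻¹ * g ω :=
    condExp_mul_of_stronglyMeasurable_left hinv_sm hInt1' hTY
  have hLHS : ∫ ω, T ω * Y1 ω / e ω ∂μ = ∫ ω, (e ω)⁻¹ * g ω ∂μ := by
    rw [h1, ← integral_condExp hm (f := fun ω => (e ω)⁻¹ * (T ω * Y1 ω)),
      integral_congr_ae hce]
  have hcovEq : (fun ω => condCov μ m T Y1 ω / e ω) =ᵐ[μ]
      fun ω => (e ω)⁻¹ * g ω - c ω := by
    filter_upwards [hne] with ω h0
    show (g ω - e ω * c ω) / e ω = (e ω)⁻¹ * g ω - c ω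
    field_simp
  have hInt3 : Integrable (fun ω => (e ω)⁻¹ * g ω) μ := by
    have h := hInt2.add (integrable_condExp : Integrable c μ)
    refine h.congr ?_
    filter_upwards [hcovEq] with ω hω
    simp only [Pi.add_apply] at *
    rw [hω]; ring
  have hYc : ∫ ω, c ω ∂μ = ∫ ω, Y1 ω ∂μ := integral_condExp hm
  have hRHS : ∫ ω, condCov μ m T Y1 ω / e ω ∂μ
      = ∫ ω, (e ω)⁻¹ * g ω ∂μ - ∫ ω, Y1 ω ∂μ := by
    rw [integral_congr_ae hcovEq, integral_sub hInt3 integrable_condExp, hYc]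
  rw [hLHS, hRHS]; ring

theorem ipw_reduced_propensity_treated
    {Ω α β : Type*} [MeasurableSpace Ω] [MeasurableSpace α] [MeasurableSpace β]
    (μ : Measure Ω) [IsProbabilityMeasure μ]
    (X : Ω → α) (d : α → β) (T Y1 : Ω → ℝ)
    (hX : Measurable X) (hd : Measurable d)
    (hT01 : ∀ ω, T ω = 0 ∨ T ω = 1)
    (hY1 : MemLp Y1 2 μ) (hT : MemLp T 2 μ)
    (ed : Ω → ℝ)
    (h_ed : ed = condExp (MeasurableSpace.comap (d ∘ X) inferInstance) μ T)
    (h_pos : ∀ᵐ ω ∂μ, 0 < ed ω ∧ ed ω < 1)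
    (hInt1 : Integrable (fun ω => T ω * Y1 ω / ed ω) μ)
    (hInt2 : Integrable
      (fun ω => condCov μ (MeasurableSpace.comap (d ∘ X) inferInstance) T Y1 ω / ed ω) μ) :
    ∫ ω, T ω * Y1 ω / ed ω ∂μ
      = ∫ ω, Y1 ω ∂μ
        + ∫ ω, condCov μ (MeasurableSpace.comap (d ∘ X) inferInstance) T Y1 ω / ed ω ∂μ := by
  have hTY : Integrable (fun ω => T ω * Y1 ω) μ := by
    have h := L2.integrable_inner (𝕜 := ℝ) (hT.toLp T) (hY1.toLp Y1)
    refine h.congr ?_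
    filter_upwards [hT.coeFn_toLp, hY1.coeFn_toLp] with ω h1 h2
    simp [h1, h2, RCLike.inner_apply, mul_comm]
  have hYint : Integrable Y1 μ := hY1.integrable one_le_two
  subst h_ed
  have hne : ∀ᵐ ω ∂μ,
      condExp (MeasurableSpace.comap (d ∘ X) inferInstance) μ T ω ≠ 0 :=
    h_pos.mono fun ω h => ne_of_gt h.1
  exact ipw_aux ((hd.comp hX)).comap_le μ T Y1 hTY hYint hne hInt1 hInt2
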